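/- Every simple 4-polytope P has fatness strictly less than 3, i.e., f₁(P) + f₂(P) < 3 · (f₀(P) + f₃(P)). -/

import Mathlib

noncomputable section

abbrev E4 := EuclideanSpace ℝ (Fin 4)

/-- A (full-dimensional) convex 4-polytope in ℝ⁴. -/
def IsPolytope4 (P : Set E4) : Prop :=
  ∃ V : Finset E4, affineSpan ℝ (V : Set E4) = ⊤ ∧ P = convexHull ℝ (V : Set E4)

/-- `F` is a nonempty exposed face of `P`. -/
def IsFaceOf (P F : Set E4) : Prop :=
  F.Nonempty ∧ ∃ c : E4, F = {x ∈ P | ∀ y ∈ P, (inner ℝ c y : ℝ) ≤ inner ℝ c x}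

/-- Affine dimension of a set. -/
def faceDim (F : Set E4) : ℕ := Module.finrank ℝ (affineSpan ℝ F).direction

/-- Number of `i`-dimensional faces of `P`. -/
def fVec (P : Set E4) (i : ℕ) : ℕ :=
  Nat.card {F : Set E4 // IsFaceOf P F ∧ faceDim F = i}

/-- `P` is simple: every vertex is contained in exactly 4 edges. -/
def SimplePolytope (P : Set E4) : Prop :=
  ∀ v : Set E4, IsFaceOf P v → faceDim v = 0 →
    Nat.card {e : Set E4 // IsFaceOf P e ∧ faceDim e = 1 ∧ v ⊆ e} = 4

open Finset

local notation "⟪" x ", " y "⟫" => (inner ℝ x y : ℝ)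

/-- the argmax subset of `V` for functional `⟪c, ·⟫`. -/
def AS (V : Finset E4) (c : E4) : Finset E4 :=
  V.filter (fun w => ∀ u ∈ V, ⟪c, u⟫ ≤ ⟪c, w⟫)

lemma AS_subset (V : Finset E4) (c : E4) : AS V c ⊆ V := filter_subset _ _

lemma AS_nonempty {V : Finset E4} (hV : V.Nonempty) (c : E4) : (AS V c).Nonempty := by
  obtain ⟨w, hw, hmax⟩ := V.exists_max_image (fun u => ⟪c, u⟫) hV
  exact ⟨w, mem_filter.2 ⟨hw, hmax⟩⟩

lemma mem_AS {V : Finset E4} {c w : E4} :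
    w ∈ AS V c ↔ w ∈ V ∧ ∀ u ∈ V, ⟪c, u⟫ ≤ ⟪c, w⟫ := mem_filter

lemma dt_le_of_mem_conv {V : Finset E4} {c w : E4} (hw : w ∈ AS V c) :
    ∀ y ∈ convexHull ℝ (V : Set E4), ⟪c, y⟫ ≤ ⟪c, w⟫ := by
  intro y hy
  have : (V : Set E4) ⊆ {y | ⟪c, y⟫ ≤ ⟪c, w⟫} := fun u hu => (mem_AS.1 hw).2 u hu
  have hconv : Convex ℝ {y : E4 | ⟪c, y⟫ ≤ ⟪c, w⟫} :=
    convex_halfSpace_le (innerSL ℝ c).toLinearMap.isLinear _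
  exact convexHull_min this hconv hy

lemma conv_AS_subset_level {V : Finset E4} {c w : E4} (hw : w ∈ AS V c) :
    convexHull ℝ (AS V c : Set E4) ⊆ {x | ⟪c, x⟫ = ⟪c, w⟫} := by
  apply convexHull_min
  · intro u hu
    have hu' := mem_AS.1 hu
    have h1 : ⟪c, u⟫ ≤ ⟪c, w⟫ := (mem_AS.1 hw).2 u (AS_subset V c hu)
    have h2 : ⟪c, w⟫ ≤ ⟪c, u⟫ := hu'.2 w (AS_subset V c hw)
    exact le_antisymm h1 h2
  · exact convex_hyperplane (innerSL ℝ c).toLinearMap.isLinear _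

/-- the key characterization: the exposed face of `conv V` for `c` is `conv (AS V c)`. -/
lemma face_eq {V : Finset E4} (hV : V.Nonempty) (c : E4) :
    {x ∈ convexHull ℝ (V : Set E4) |
      ∀ y ∈ convexHull ℝ (V : Set E4), ⟪c, y⟫ ≤ ⟪c, x⟫}
      = convexHull ℝ (AS V c : Set E4) := by
  obtain ⟨w, hw⟩ := AS_nonempty hV c
  ext x
  constructor
  · rintro ⟨hxP, hxmax⟩
    have hxw : ⟪c, x⟫ = ⟪c, w⟫ := by
      have h1 : ⟪c, x⟫ ≤ ⟪c, w⟫ := dt_le_of_mem_conv hw x hxP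
      have h2 : ⟪c, w⟫ ≤ ⟪c, x⟫ := by
        apply hxmax
        exact subset_convexHull ℝ _ (AS_subset V c hw)
      linarith
    -- write x as a convex combination
    rw [Finset.convexHull_eq] at hxP
    obtain ⟨lam, hlam0, hlam1, hx⟩ := hxP
    -- the support of lam is inside AS V c
    have hsupp : ∀ y ∈ V, lam y ≠ 0 → y ∈ AS V c := by
      intro y hy hly
      by_contra hyAS
      -- then ⟪c,y⟫ < ⟪c,w⟫, so the sum is < max; contradiction
      have hstrict : ∀ u ∈ V, ⟪c, u⟫ ≤ ⟪c, w⟫ :=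
        fun u hu => dt_le_of_mem_conv hw u (subset_convexHull ℝ _ hu)
      have hylt : ⟪c, y⟫ < ⟪c, w⟫ := by
        rcases lt_or_eq_of_le (hstrict y hy) with h | h
        · exact h
        · exact absurd (mem_AS.2 ⟨hy, fun u hu => h ▸ hstrict u hu⟩) hyAS
      have hsum : ∑ u ∈ V, lam u * ⟪c, u⟫ = ⟪c, x⟫ := by
        rw [← hx, Finset.centerMass, hlam1, inv_one, one_smul]
        rw [inner_sum]
        congr 1; ext u
        rw [real_inner_smul_right]; rfl
      have hle : ∀ u ∈ V, lam u * ⟪c, u⟫ ≤ lam u * ⟪c, w⟫ := by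
        intro u hu
        by_cases h0 : u = y
        · subst h0; nlinarith [hlam0 u hu, hylt]
        · exact mul_le_mul_of_nonneg_left (hstrict u hu) (hlam0 u hu)
      have hltsum : ∑ u ∈ V, lam u * ⟪c, u⟫ < ∑ u ∈ V, lam u * ⟪c, w⟫ := by
        apply Finset.sum_lt_sum hle
        refine ⟨y, hy, ?_⟩
        have : 0 < lam y := lt_of_le_of_ne (hlam0 y hy) (Ne.symm hly)
        nlinarith
      have : ∑ u ∈ V, lam u * ⟪c, w⟫ = ⟪c, w⟫ := by
        rw [← Finset.sum_mul, hlam1, one_mul]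
      rw [hsum, this, hxw] at hltsum
      exact lt_irrefl _ hltsum
    -- now x is a centerMass of points in AS V c
    have hfilt : (V.filter fun y => lam y ≠ 0).centerMass lam id = x := by
      rw [Finset.centerMass_filter_ne_zero]; exact hx
    have : x ∈ convexHull ℝ ((V.filter fun y => lam y ≠ 0) : Set E4) → _ := id
    have hmem : x ∈ convexHull ℝ ((AS V c : Finset E4) : Set E4) := by
      rw [← hfilt]
      apply Finset.centerMass_mem_convexHull
      · intro i hi; exact hlam0 i (mem_filter.1 hi).1
      · rw [Finset.sum_filter_ne_zero, hlam1]; norm_num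
      · intro i hi
        have := mem_filter.1 hi
        exact hsupp i this.1 this.2
    exact hmem
  · intro hx
    have hxP : x ∈ convexHull ℝ (V : Set E4) :=
      convexHull_mono (by exact_mod_cast AS_subset V c) hx
    refine ⟨hxP, fun y hy => ?_⟩
    have hxw : ⟪c, x⟫ = ⟪c, w⟫ := conv_AS_subset_level hw hx
    rw [hxw]
    exact dt_le_of_mem_conv hw y hy

lemma conv_AS_inter_V {V : Finset E4} (hV : V.Nonempty) (c : E4) :
    convexHull ℝ (AS V c : Set E4) ∩ (V : Set E4) = (AS V c : Set E4) := by
  obtain ⟨w, hw⟩ := AS_nonempty hV c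
  apply Set.Subset.antisymm
  · rintro u ⟨hu1, hu2⟩
    have : ⟪c, u⟫ = ⟪c, w⟫ := conv_AS_subset_level hw hu1
    refine mem_coe.2 (mem_AS.2 ⟨mem_coe.1 hu2, fun z hz => ?_⟩)
    rw [this]
    exact dt_le_of_mem_conv hw z (subset_convexHull ℝ _ hz)
  · intro u hu
    exact ⟨subset_convexHull ℝ _ hu, AS_subset V c hu⟩

lemma isFaceOf_iff {V : Finset E4} (hV : V.Nonempty) (F : Set E4) :
    IsFaceOf (convexHull ℝ (V : Set E4)) F ↔ ∃ c, F = convexHull ℝ (AS V c : Set E4) := by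
  constructor
  · rintro ⟨hne, c, rfl⟩
    exact ⟨c, face_eq hV c⟩
  · rintro ⟨c, rfl⟩
    refine ⟨?_, c, (face_eq hV c).symm⟩
    obtain ⟨w, hw⟩ := AS_nonempty hV c
    exact ⟨w, subset_convexHull ℝ _ hw⟩


lemma faceDim_conv (S : Finset E4) :
    faceDim (convexHull ℝ (S : Set E4)) = Module.finrank ℝ (vectorSpan ℝ (S : Set E4)) := by
  unfold faceDim
  rw [affineSpan_convexHull, direction_affineSpan]

lemma vectorSpan_finset_eq_span {S : Finset E4} {v : E4} (hv : v ∈ S) :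
    vectorSpan ℝ (S : Set E4) = Submodule.span ℝ ((fun w => w - v) '' (S : Set E4)) := by
  rw [vectorSpan_eq_span_vsub_set_right ℝ (mem_coe.2 hv)]
  rfl

lemma faceDim_singleton (v : E4) : faceDim {v} = 0 := by
  unfold faceDim
  rw [direction_affineSpan]
  have : vectorSpan ℝ ({v} : Set E4) = ⊥ := vectorSpan_singleton ℝ v
  rw [this]; exact finrank_bot ℝ E4

lemma finset_subsingleton_of_vectorSpan_eq_bot {S : Finset E4}
    (h : Module.finrank ℝ (vectorSpan ℝ (S : Set E4)) = 0) {w w' : E4}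
    (hw : w ∈ S) (hw' : w' ∈ S) : w = w' := by
  have hbot : vectorSpan ℝ (S : Set E4) = ⊥ := Submodule.finrank_eq_zero.1 h
  have : w -ᵥ w' ∈ vectorSpan ℝ (S : Set E4) :=
    vsub_mem_vectorSpan ℝ (mem_coe.2 hw) (mem_coe.2 hw')
  rw [hbot, Submodule.mem_bot] at this
  have : w - w' = 0 := this
  linear_combination (norm := module) this

/-- a zero-dimensional `conv S` (S nonempty) is a singleton with `S = {v}`. -/
lemma dim0_singleton {S : Finset E4} (hS : S.Nonempty)
    (h : faceDim (convexHull ℝ (S : Set E4)) = 0) :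
    ∃ v, S = {v} ∧ convexHull ℝ (S : Set E4) = {v} := by
  obtain ⟨v, hv⟩ := hS
  rw [faceDim_conv] at h
  have hSv : S = {v} := by
    apply Finset.eq_singleton_iff_unique_mem.2
    exact ⟨hv, fun w hw => finset_subsingleton_of_vectorSpan_eq_bot h hw hv⟩
  exact ⟨v, hSv, by rw [hSv]; simp⟩

/-- points of the affine span of a level set of `⟪c,·⟫` are in the level set. -/
lemma affineSpan_level {c : E4} {M : ℝ} {F : Set E4}
    (hF : F ⊆ {x | ⟪c, x⟫ = M}) {x : E4} (hx : x ∈ affineSpan ℝ F) : ⟪c, x⟫ = M := by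
  refine affineSpan_induction (p := fun x => ⟪c, x⟫ = M) hx (fun y hy => hF hy) ?_
  intro t u v w hu hv hw
  have : (t • (u -ᵥ v) +ᵥ w : E4) = t • (u - v) + w := rfl
  rw [this, inner_add_right, real_inner_smul_right, inner_sub_right, hu, hv, hw]
  ring

section B3
local instance : DecidableEq E4 := Classical.decEq _
variable {V : Finset E4}

lemma mem_face_of_level {c : E4} {x w : E4} (hw : w ∈ AS V c)
    (hxP : x ∈ convexHull ℝ (V : Set E4)) (hxl : ⟪c, x⟫ = ⟪c, w⟫) :
    x ∈ convexHull ℝ (AS V c : Set E4) := by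
  have hV : V.Nonempty := ⟨w, AS_subset V c hw⟩
  rw [← face_eq hV c]
  refine ⟨hxP, fun y hy => ?_⟩
  rw [hxl]; exact dt_le_of_mem_conv hw y hy

lemma subset_face_of_subset_affineSpan (hV : V.Nonempty) {c : E4} {G : Set E4}
    (hGP : G ⊆ convexHull ℝ (V : Set E4))
    (hGspan : G ⊆ (affineSpan ℝ (convexHull ℝ (AS V c : Set E4)) : Set E4)) :
    G ⊆ convexHull ℝ (AS V c : Set E4) := by
  obtain ⟨w, hw⟩ := AS_nonempty hV c
  intro x hx
  have hxl : ⟪c, x⟫ = ⟪c, w⟫ :=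
    affineSpan_level (conv_AS_subset_level hw) (hGspan hx)
  exact mem_face_of_level hw (hGP hx) hxl

/-- perturbation: maximizing `c + ε•d` on `V` = maximizing `d` on the `c`-argmax set. -/
lemma exists_pert (hV : V.Nonempty) (c d : E4) :
    ∃ c' : E4, AS V c' = AS (AS V c) d := by
  set A := AS V c with hA
  have hAne : A.Nonempty := AS_nonempty hV c
  obtain ⟨w₀, hw₀⟩ := AS_nonempty hAne d
  have hw₀A : w₀ ∈ A := AS_subset A d hw₀
  set M : ℝ := ⟪c, w₀⟫ with hM
  have hMmax : ∀ u ∈ V, ⟪c, u⟫ ≤ M :=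
    fun u hu => dt_le_of_mem_conv hw₀A u (subset_convexHull ℝ _ hu)
  have hMA : ∀ u ∈ A, ⟪c, u⟫ = M := by
    intro u hu
    exact le_antisymm (hMmax u (AS_subset V c hu)) ((mem_AS.1 hu).2 w₀ (AS_subset V c hw₀A))
  by_cases hVA : V \ A = ∅
  · refine ⟨d, ?_⟩
    have hAV : A = V := by
      apply Finset.Subset.antisymm (AS_subset V c)
      intro u hu
      by_contra h
      have hmem : u ∈ V \ A := Finset.mem_sdiff.2 ⟨hu, h⟩
      rw [hVA] at hmem
      exact absurd hmem (Finset.notMem_empty u)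
    rw [hAV]
  · have hVAne : (V \ A).Nonempty := Finset.nonempty_iff_ne_empty.2 hVA
    set img := (V \ A).image (fun u => M - ⟪c, u⟫) with himg
    have himgne : img.Nonempty := hVAne.image _
    set δ : ℝ := img.min' himgne with hδ
    have hδpos : 0 < δ := by
      apply (Finset.lt_min'_iff _ _).2
      intro b hb
      obtain ⟨u, hu, rfl⟩ := Finset.mem_image.1 hb
      have hu' := Finset.mem_sdiff.1 hu
      have : ⟪c, u⟫ < M := by
        rcases lt_or_eq_of_le (hMmax u hu'.1) with h | h
        · exact h
        · exact absurd (mem_AS.2 ⟨hu'.1, fun z hz => h ▸ hMmax z hz⟩) hu'.2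
      linarith
    have hδle : ∀ u ∈ V, u ∉ A → ⟪c, u⟫ ≤ M - δ := by
      intro u hu huA
      have : M - ⟪c, u⟫ ∈ img := Finset.mem_image_of_mem _ (Finset.mem_sdiff.2 ⟨hu, huA⟩)
      have := Finset.min'_le _ _ this
      linarith
    set imgB := V.image (fun u => |⟪d, u⟫|) with himgB
    set B : ℝ := imgB.max' (hV.image _) with hB
    have hBle : ∀ u ∈ V, |⟪d, u⟫| ≤ B := by
      intro u hu
      rw [hB]
      exact Finset.le_max' imgB _ (by rw [himgB]; exact Finset.mem_image_of_mem _ hu)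
    set ε : ℝ := δ / (2 * B + 1) with hε
    have hBpos : 0 ≤ B := le_trans (abs_nonneg _) (hBle w₀ (AS_subset V c hw₀A))
    have hεpos : 0 < ε := div_pos hδpos (by linarith)
    refine ⟨c + ε • d, ?_⟩
    have hdot : ∀ u : E4, ⟪c + ε • d, u⟫ = ⟪c, u⟫ + ε * ⟪d, u⟫ := by
      intro u; rw [inner_add_left, real_inner_smul_left]
    have key : ∀ u ∈ V, u ∉ A → ∀ w ∈ AS A d, ⟪c + ε • d, u⟫ < ⟪c + ε • d, w⟫ := by
      intro u hu huA w hw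
      have hwA : w ∈ A := AS_subset A d hw
      have hwV : w ∈ V := AS_subset V c hwA
      have h1 : ⟪c, u⟫ ≤ M - δ := hδle u hu huA
      have h2 : ⟪c, w⟫ = M := hMA w hwA
      have h3 : |⟪d, u⟫| ≤ B := hBle u hu
      have h4 : |⟪d, w⟫| ≤ B := hBle w hwV
      rw [hdot, hdot, h2]
      rw [abs_le] at h3 h4
      have hεB : ε * (2 * B + 1) = δ := by
        rw [hε]; field_simp
      nlinarith [h3.1, h3.2, h4.1, h4.2, hεpos]
    ext u
    constructor
    · intro hu
      have huV : u ∈ V := AS_subset V _ hu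
      have hcomp : ⟪c + ε • d, w₀⟫ ≤ ⟪c + ε • d, u⟫ :=
        (mem_AS.1 hu).2 w₀ (AS_subset V c hw₀A)
      have huA : u ∈ A := by
        by_contra h
        exact absurd hcomp (not_le.2 (key u huV h w₀ hw₀))
      refine mem_AS.2 ⟨huA, fun z hz => ?_⟩
      have hzd : ⟪d, z⟫ ≤ ⟪d, w₀⟫ := (mem_AS.1 hw₀).2 z hz
      have : ⟪c, u⟫ = M := hMA u huA
      rw [hdot, hdot, this, hMA w₀ hw₀A] at hcomp
      have : ⟪d, w₀⟫ ≤ ⟪d, u⟫ := by nlinarith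
      linarith
    · intro hu
      have huA : u ∈ A := AS_subset A d hu
      have huV : u ∈ V := AS_subset V c huA
      refine mem_AS.2 ⟨huV, fun z hz => ?_⟩
      by_cases hzA : z ∈ A
      · have : ⟪d, z⟫ ≤ ⟪d, u⟫ := (mem_AS.1 hu).2 z hzA
        rw [hdot, hdot, hMA z hzA, hMA u huA]
        nlinarith
      · exact le_of_lt (key z hz hzA u hu)
end B3

section B4
local instance : DecidableEq E4 := Classical.decEq _

/-- normalized direction from `v` to `w` (w.r.t. the supporting functional `c₀`). -/
def uh (c₀ v w : E4) : E4 := (-(⟪c₀, w - v⟫))⁻¹ • (w - v)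

def AsetF (V : Finset E4) (c₀ v : E4) : Finset E4 := (V.erase v).image (uh c₀ v)

def KK (V : Finset E4) (c₀ v : E4) : Set E4 := convexHull ℝ (AsetF V c₀ v : Set E4)

def ExtS (V : Finset E4) (c₀ v : E4) : Set E4 := (KK V c₀ v).extremePoints ℝ

def ExtF (V : Finset E4) (c₀ v : E4) : Finset E4 :=
  @Finset.filter _ (fun p => p ∈ ExtS V c₀ v) (Classical.decPred _) (AsetF V c₀ v)

/-- the points of `V` on the open ray from `v` in direction `p`. -/
def Rp (V : Finset E4) (v p : E4) : Finset E4 :=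
  @Finset.filter _ (fun w => ∃ t : ℝ, 0 < t ∧ w - v = t • p) (Classical.decPred _) V

variable {V : Finset E4} {c₀ v : E4}

lemma vmemAS (hv : AS V c₀ = {v}) : v ∈ AS V c₀ := by rw [hv]; exact Finset.mem_singleton_self v

lemma vmem (hv : AS V c₀ = {v}) : v ∈ V := AS_subset V c₀ (vmemAS hv)

lemma hVne (hv : AS V c₀ = {v}) : V.Nonempty := ⟨v, vmem hv⟩

lemma strictc₀ (hv : AS V c₀ = {v}) : ∀ w ∈ V, w ≠ v → ⟪c₀, w - v⟫ < 0 := by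
  intro w hw hwv
  have hmax : ∀ u ∈ V, ⟪c₀, u⟫ ≤ ⟪c₀, v⟫ := (mem_AS.1 (vmemAS hv)).2
  have hle : ⟪c₀, w⟫ ≤ ⟪c₀, v⟫ := hmax w hw
  rcases lt_or_eq_of_le hle with h | h
  · rw [inner_sub_right]; linarith
  · exfalso
    have : w ∈ AS V c₀ := mem_AS.2 ⟨hw, fun u hu => (hmax u hu).trans_eq h.symm⟩
    rw [hv, Finset.mem_singleton] at this
    exact hwv this

lemma sc_pos (hv : AS V c₀ = {v}) {w : E4} (hw : w ∈ V) (hwv : w ≠ v) :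
    0 < -(⟪c₀, w - v⟫) := by linarith [strictc₀ hv w hw hwv]

lemma uh_spec (hv : AS V c₀ = {v}) {w : E4} (hw : w ∈ V) (hwv : w ≠ v) :
    w - v = (-(⟪c₀, w - v⟫)) • uh c₀ v w ∧ ⟪c₀, uh c₀ v w⟫ = -1 := by
  have hs := sc_pos hv hw hwv
  constructor
  · rw [uh, smul_smul, mul_inv_cancel₀ (ne_of_gt hs), one_smul]
  · have hne : ⟪c₀, w - v⟫ ≠ 0 := by linarith
    rw [uh, real_inner_smul_right, inv_neg, neg_mul, inv_mul_cancel₀ hne]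

lemma mem_AsetF_iff {p : E4} :
    p ∈ AsetF V c₀ v ↔ ∃ w ∈ V, w ≠ v ∧ uh c₀ v w = p := by
  simp only [AsetF, Finset.mem_image, Finset.mem_erase]
  constructor
  · rintro ⟨w, ⟨hwv, hw⟩, rfl⟩; exact ⟨w, hw, hwv, rfl⟩
  · rintro ⟨w, hw, hwv, rfl⟩; exact ⟨w, ⟨hwv, hw⟩, rfl⟩

lemma AsetF_inner (hv : AS V c₀ = {v}) {p : E4} (hp : p ∈ AsetF V c₀ v) :
    ⟪c₀, p⟫ = -1 := by
  obtain ⟨w, hw, hwv, rfl⟩ := mem_AsetF_iff.1 hp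
  exact (uh_spec hv hw hwv).2

lemma AsetF_ne_zero (hv : AS V c₀ = {v}) {p : E4} (hp : p ∈ AsetF V c₀ v) : p ≠ 0 := by
  intro h
  have := AsetF_inner hv hp
  rw [h, inner_zero_right] at this
  norm_num at this

/-- membership in the ray set: for `p ∈ AsetF`, `w ∈ Rp` iff `uh w = p`. -/
lemma mem_Rp' {p w : E4} :
    w ∈ Rp V v p ↔ w ∈ V ∧ ∃ t : ℝ, 0 < t ∧ w - v = t • p :=
  @Finset.mem_filter _ (fun w => ∃ t : ℝ, 0 < t ∧ w - v = t • p) (Classical.decPred _) V w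

lemma mem_Rp_iff (hv : AS V c₀ = {v}) {p : E4} (hp : p ∈ AsetF V c₀ v) {w : E4} :
    w ∈ Rp V v p ↔ w ∈ V ∧ w ≠ v ∧ uh c₀ v w = p := by
  have hpc : ⟪c₀, p⟫ = -1 := AsetF_inner hv hp
  rw [mem_Rp']
  constructor
  · rintro ⟨hw, t, ht, hwt⟩
    have hwv : w ≠ v := by
      intro h; rw [h, sub_self] at hwt
      have : p = 0 := by
        have := hwt.symm
        rwa [smul_eq_zero_iff_right (ne_of_gt ht)] at this
      exact AsetF_ne_zero hv hp this
    refine ⟨hw, hwv, ?_⟩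
    have hsc : -(⟪c₀, w - v⟫) = t := by
      rw [hwt, real_inner_smul_right, hpc]; ring
    rw [uh, hsc, hwt, smul_smul, inv_mul_cancel₀ (ne_of_gt ht), one_smul]
  · rintro ⟨hw, hwv, rfl⟩
    exact ⟨hw, -(⟪c₀, w - v⟫), sc_pos hv hw hwv, (uh_spec hv hw hwv).1⟩

lemma v_notmem_Rp (hv : AS V c₀ = {v}) {p : E4} (hp : p ∈ AsetF V c₀ v) :
    v ∉ Rp V v p := fun h => ((mem_Rp_iff hv hp).1 h).2.1 rfl

lemma Rp_subset (p : E4) : Rp V v p ⊆ V := fun w hw => (mem_Rp'.1 hw).1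

/-- Krein-Milman + finiteness: `KK` is the hull of its extreme points. -/
lemma KK_eq_conv_ExtF : KK V c₀ v = convexHull ℝ (ExtF V c₀ v : Set E4) := by
  have hfin : ((AsetF V c₀ v : Set E4)).Finite := (AsetF V c₀ v).finite_toSet
  have hcomp : IsCompact (KK V c₀ v) := hfin.isCompact_convexHull ℝ
  have hconv : Convex ℝ (KK V c₀ v) := convex_convexHull ℝ _
  have hsub : ExtS V c₀ v ⊆ (AsetF V c₀ v : Set E4) := extremePoints_convexHull_subset
  have hEfin : (ExtS V c₀ v).Finite := hfin.subset hsub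
  have hclos : closure (convexHull ℝ (ExtS V c₀ v)) = KK V c₀ v :=
    closure_convexHull_extremePoints hcomp hconv
  have hext : (ExtF V c₀ v : Set E4) = ExtS V c₀ v := by
    ext p
    simp only [ExtF, Finset.coe_filter, Set.mem_setOf_eq, Finset.mem_coe]
    exact ⟨fun h => h.2, fun h => ⟨hsub h, h⟩⟩
  rw [hext, ← hclos, IsClosed.closure_eq (hEfin.isClosed_convexHull ℝ)]

lemma mem_ExtF' {p : E4} :
    p ∈ ExtF V c₀ v ↔ p ∈ AsetF V c₀ v ∧ p ∈ ExtS V c₀ v :=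
  @Finset.mem_filter _ (fun p => p ∈ ExtS V c₀ v) (Classical.decPred _) (AsetF V c₀ v) p

lemma ExtF_subset_AsetF : ExtF V c₀ v ⊆ AsetF V c₀ v := fun w hw => (mem_ExtF'.1 hw).1

lemma mem_ExtF_iff {p : E4} : p ∈ ExtF V c₀ v ↔ p ∈ ExtS V c₀ v := by
  rw [mem_ExtF']
  constructor
  · exact fun h => h.2
  · intro h
    refine ⟨?_, h⟩
    have hsub : ExtS V c₀ v ⊆ (AsetF V c₀ v : Set E4) := extremePoints_convexHull_subset
    exact_mod_cast hsub h

/-- an extreme point of `KK` is not in the hull of the other candidate points. -/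
lemma ext_not_mem_conv_erase {p : E4} (hp : p ∈ ExtF V c₀ v) :
    p ∉ convexHull ℝ (((AsetF V c₀ v).erase p : Finset E4) : Set E4) := by
  intro hmem
  have hBsub : convexHull ℝ (((AsetF V c₀ v).erase p : Finset E4) : Set E4) ⊆ KK V c₀ v :=
    convexHull_mono (by exact_mod_cast Finset.erase_subset p (AsetF V c₀ v))
  have hpe : p ∈ ExtS V c₀ v := mem_ExtF_iff.1 hp
  rw [ExtS, mem_extremePoints] at hpe
  have hpB : p ∈ (convexHull ℝ (((AsetF V c₀ v).erase p : Finset E4) : Set E4)).extremePoints ℝ := by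
    rw [mem_extremePoints]
    exact ⟨hmem, fun x1 hx1 x2 hx2 h => hpe.2 x1 (hBsub hx1) x2 (hBsub hx2) h⟩
  have := extremePoints_convexHull_subset hpB
  simp at this
end B4

section B5
local instance : DecidableEq E4 := Classical.decEq _
variable {V : Finset E4} {c₀ v : E4}

/-- X1: every extreme direction of the tangent cone section gives an edge at `v`. -/
lemma edge_of_ext (hv : AS V c₀ = {v}) {p : E4} (hp : p ∈ ExtF V c₀ v) :
    (∃ c, AS V c = insert v (Rp V v p)) ∧ (Rp V v p).Nonempty ∧
      faceDim (convexHull ℝ ((insert v (Rp V v p) : Finset E4) : Set E4)) = 1 := by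
  have hpA : p ∈ AsetF V c₀ v := ExtF_subset_AsetF hp
  obtain ⟨w₁, hw₁V, hw₁v, hw₁p⟩ := mem_AsetF_iff.1 hpA
  have hw₁R : w₁ ∈ Rp V v p := (mem_Rp_iff hv hpA).2 ⟨hw₁V, hw₁v, hw₁p⟩
  have hpne : p ≠ 0 := AsetF_ne_zero hv hpA
  -- separation of p from the other candidate directions
  obtain ⟨f, u, hfu, hup⟩ := geometric_hahn_banach_closed_point
    (convex_convexHull ℝ (((AsetF V c₀ v).erase p : Finset E4) : Set E4))
    (((AsetF V c₀ v).erase p).finite_toSet.isClosed_convexHull ℝ)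
    (ext_not_mem_conv_erase hp)
  set c₁ : E4 := (InnerProductSpace.toDual ℝ E4).symm f with hc₁def
  have hc₁app : ∀ x : E4, ⟪c₁, x⟫ = f x := fun x => InnerProductSpace.toDual_symm_apply
  have hc₁ : ∀ q ∈ AsetF V c₀ v, q ≠ p → ⟪c₁, q⟫ < ⟪c₁, p⟫ := by
    intro q hq hqp
    have hq' : q ∈ convexHull ℝ (((AsetF V c₀ v).erase p : Finset E4) : Set E4) :=
      subset_convexHull ℝ _ (Finset.mem_erase.2 ⟨hqp, hq⟩)
    rw [hc₁app, hc₁app]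
    exact lt_trans (hfu q hq') hup
  set γ : ℝ := ⟪c₁, p⟫ with hγ
  set c : E4 := c₁ + γ • c₀ with hc
  have key : ∀ w ∈ V, w ≠ v → (⟪c, w - v⟫ ≤ 0 ∧ (⟪c, w - v⟫ = 0 ↔ uh c₀ v w = p)) := by
    intro w hw hwv
    have hs := sc_pos hv hw hwv
    have hrep := (uh_spec hv hw hwv).1
    have hcu : ⟪c₀, uh c₀ v w⟫ = -1 := (uh_spec hv hw hwv).2
    have hcalc : ⟪c, w - v⟫ = (-(⟪c₀, w - v⟫)) * (⟪c₁, uh c₀ v w⟫ - γ) := by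
      conv_lhs => rw [hrep]
      rw [hc, real_inner_smul_right, inner_add_left, real_inner_smul_left, hcu]
      ring
    have huA : uh c₀ v w ∈ AsetF V c₀ v := mem_AsetF_iff.2 ⟨w, hw, hwv, rfl⟩
    by_cases hup' : uh c₀ v w = p
    · rw [hcalc, hup']
      constructor
      · simp [hγ]
      · simp [hγ, hup']
    · have hlt : ⟪c₁, uh c₀ v w⟫ < γ := hc₁ _ huA hup'
      constructor
      · rw [hcalc]; nlinarith
      · rw [hcalc]
        constructor
        · intro h0
          exfalso; nlinarith
        · intro h; exact absurd h hup'
  have hvmax : ∀ u ∈ V, ⟪c, u⟫ ≤ ⟪c, v⟫ := by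
    intro u hu
    by_cases huv : u = v
    · rw [huv]
    · have := (key u hu huv).1
      rw [inner_sub_right] at this; linarith
  have hAS : AS V c = insert v (Rp V v p) := by
    ext w
    rw [mem_AS, Finset.mem_insert]
    constructor
    · rintro ⟨hw, hmax⟩
      by_cases hwv : w = v
      · exact Or.inl hwv
      · right
        have heq : ⟪c, w - v⟫ = 0 := by
          have h1 : ⟪c, v⟫ ≤ ⟪c, w⟫ := hmax v (vmem hv)
          have h2 := hvmax w hw
          rw [inner_sub_right]; linarith
        exact (mem_Rp_iff hv hpA).2 ⟨hw, hwv, ((key w hw hwv).2).1 heq⟩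
    · intro h
      rcases h with rfl | hR
      · exact ⟨vmem hv, hvmax⟩
      · obtain ⟨hwV, hwv, hwu⟩ := (mem_Rp_iff hv hpA).1 hR
        have heq : ⟪c, w - v⟫ = 0 := ((key w hwV hwv).2).2 hwu
        rw [inner_sub_right] at heq
        exact ⟨hwV, fun z hz => by linarith [hvmax z hz]⟩
  refine ⟨⟨c, hAS⟩, ⟨w₁, hw₁R⟩, ?_⟩
  -- dimension computation
  rw [faceDim_conv]
  have hspan : vectorSpan ℝ ((insert v (Rp V v p) : Finset E4) : Set E4)
      = Submodule.span ℝ ({p} : Set E4) := by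
    rw [vectorSpan_finset_eq_span (Finset.mem_insert_self v _)]
    apply le_antisymm
    · rw [Submodule.span_le]
      rintro x ⟨w, hw, rfl⟩
      rw [Finset.mem_coe, Finset.mem_insert] at hw
      rw [SetLike.mem_coe]
      show w - v ∈ _
      rcases hw with rfl | hR
      · simp
      · obtain ⟨t, ht, hwt⟩ := (mem_Rp'.1 hR).2
        rw [hwt]
        exact Submodule.smul_mem _ t (Submodule.subset_span rfl)
    · rw [Submodule.span_le, Set.singleton_subset_iff]
      obtain ⟨t, ht, hwt⟩ := (mem_Rp'.1 hw₁R).2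
      have hpe : p = t⁻¹ • (w₁ - v) := by
        rw [hwt, smul_smul, inv_mul_cancel₀ (ne_of_gt ht), one_smul]
      rw [SetLike.mem_coe]
      have hmem := Submodule.subset_span (R := ℝ)
        (s := ((fun w => w - v) '' ((insert v (Rp V v p) : Finset E4) : Set E4)))
        ⟨w₁, by simp [hw₁R], rfl⟩
      have h2 := Submodule.smul_mem _ t⁻¹ hmem
      rw [← hpe] at h2
      exact h2
  rw [hspan]
  exact finrank_span_singleton hpne

/-- X2: every edge at `v` comes from an extreme direction. -/
lemma ext_of_edge (hv : AS V c₀ = {v}) {c : E4} (hvc : v ∈ AS V c)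
    (hdim : faceDim (convexHull ℝ (AS V c : Set E4)) = 1) :
    ∃ p, p ∈ ExtF V c₀ v ∧ AS V c = insert v (Rp V v p) := by
  have hmax : ∀ u ∈ V, ⟪c, u⟫ ≤ ⟪c, v⟫ := (mem_AS.1 hvc).2
  have hlevel : ∀ w ∈ AS V c, ⟪c, w⟫ = ⟪c, v⟫ := fun w hw =>
    le_antisymm (hmax w (AS_subset V c hw)) ((mem_AS.1 hw).2 v (vmem hv))
  have hmemAS : ∀ w ∈ V, ⟪c, w⟫ = ⟪c, v⟫ → w ∈ AS V c := by
    intro w hw hwc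
    exact mem_AS.2 ⟨hw, fun z hz => by rw [hwc]; exact hmax z hz⟩
  -- find a second point of the argmax set
  have hw₀ : ∃ w₀ ∈ AS V c, w₀ ≠ v := by
    by_contra h
    push_neg at h
    have hASv : AS V c = {v} := Finset.eq_singleton_iff_unique_mem.2 ⟨hvc, fun w hw => h w hw⟩
    rw [hASv] at hdim
    rw [Finset.coe_singleton, convexHull_singleton, faceDim_singleton] at hdim
    norm_num at hdim
  obtain ⟨w₀, hw₀AS, hw₀v⟩ := hw₀
  have hw₀V : w₀ ∈ V := AS_subset V c hw₀AS
  set p : E4 := uh c₀ v w₀ with hpdef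
  have hpA : p ∈ AsetF V c₀ v := mem_AsetF_iff.2 ⟨w₀, hw₀V, hw₀v, rfl⟩
  have hs₀ := sc_pos hv hw₀V hw₀v
  have hrep₀ := (uh_spec hv hw₀V hw₀v).1
  have hw₀ne : w₀ - v ≠ 0 := sub_ne_zero.2 hw₀v
  -- the one-dimensional span
  have hspan : vectorSpan ℝ (AS V c : Set E4) = Submodule.span ℝ {w₀ - v} := by
    rw [faceDim_conv] at hdim
    symm
    apply Submodule.eq_of_le_of_finrank_le
    · rw [Submodule.span_le, Set.singleton_subset_iff]
      have := vsub_mem_vectorSpan ℝ (Finset.mem_coe.2 hw₀AS) (Finset.mem_coe.2 (hvc))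
      exact this
    · rw [hdim, finrank_span_singleton hw₀ne]
  have hASchar : AS V c = insert v (Rp V v p) := by
    ext w
    rw [Finset.mem_insert]
    constructor
    · intro hw
      by_cases hwv : w = v
      · exact Or.inl hwv
      · right
        have hwV : w ∈ V := AS_subset V c hw
        have : w - v ∈ Submodule.span ℝ ({w₀ - v} : Set E4) := by
          rw [← hspan]
          exact vsub_mem_vectorSpan ℝ (Finset.mem_coe.2 hw) (Finset.mem_coe.2 hvc)
        obtain ⟨t, ht⟩ := Submodule.mem_span_singleton.1 this
        have htpos : 0 < t := by
          have h1 : ⟪c₀, w - v⟫ < 0 := strictc₀ hv w hwV hwv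
          have h2 : ⟪c₀, w₀ - v⟫ < 0 := strictc₀ hv w₀ hw₀V hw₀v
          rw [← ht, real_inner_smul_right] at h1
          nlinarith
        refine mem_Rp'.2 ⟨hwV, t * (-(⟪c₀, w₀ - v⟫)), by positivity, ?_⟩
        rw [← ht, ← smul_smul]
        congr 1
    · intro h
      rcases h with rfl | hR
      · exact hvc
      · obtain ⟨hwV, t, ht, hwt⟩ := mem_Rp'.1 hR
        apply hmemAS w hwV
        have hcp : ⟪c, p⟫ = 0 := by
          have h1 : ⟪c, w₀ - v⟫ = 0 := by
            rw [inner_sub_right, hlevel w₀ hw₀AS]; ring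
          rw [hrep₀, real_inner_smul_right] at h1
          rcases mul_eq_zero.1 h1 with h | h
          · exfalso; linarith
          · exact h
        have : ⟪c, w - v⟫ = 0 := by rw [hwt, real_inner_smul_right, hcp]; ring
        rw [inner_sub_right] at this; linarith
  refine ⟨p, ?_, hASchar⟩
  -- p is an extreme point of KK
  rw [mem_ExtF_iff, ExtS, mem_extremePoints]
  have hpK : p ∈ KK V c₀ v := subset_convexHull ℝ _ (Finset.mem_coe.2 hpA)
  -- c is nonpositive on all candidate directions, zero exactly at p
  have hq : ∀ q ∈ AsetF V c₀ v, ⟪c, q⟫ ≤ 0 ∧ (⟪c, q⟫ = 0 → q = p) := by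
    intro q hq
    obtain ⟨w, hwV, hwv, rfl⟩ := mem_AsetF_iff.1 hq
    have hs := sc_pos hv hwV hwv
    have hle : ⟪c, w - v⟫ ≤ 0 := by
      rw [inner_sub_right]; linarith [hmax w hwV]
    have hval : ⟪c, uh c₀ v w⟫ = (-(⟪c₀, w - v⟫))⁻¹ * ⟪c, w - v⟫ := by
      rw [uh, real_inner_smul_right]
    constructor
    · rw [hval]
      apply mul_nonpos_of_nonneg_of_nonpos (le_of_lt (inv_pos.2 hs)) hle
    · intro h0
      rw [hval] at h0
      have hwc : ⟪c, w - v⟫ = 0 := by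
        rcases mul_eq_zero.1 h0 with h | h
        · exfalso; have := inv_pos.2 hs; linarith
        · exact h
      have hwAS : w ∈ AS V c := by
        apply hmemAS w hwV
        rw [inner_sub_right] at hwc; linarith
      have : w ∈ insert v (Rp V v p) := by rw [← hASchar]; exact hwAS
      rw [Finset.mem_insert] at this
      rcases this with rfl | hR
      · exact absurd rfl hwv
      · exact ((mem_Rp_iff hv hpA).1 hR).2.2
  have hKle : ∀ x ∈ KK V c₀ v, ⟪c, x⟫ ≤ 0 := by
    intro x hx
    have : (AsetF V c₀ v : Set E4) ⊆ {y | ⟪c, y⟫ ≤ 0} := fun q hq' => (hq q hq').1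
    exact convexHull_min this (convex_halfSpace_le (innerSL ℝ c).toLinearMap.isLinear _) hx
  have hcp0 : ⟪c, p⟫ = 0 := by
    have h1 : ⟪c, w₀ - v⟫ = 0 := by
      rw [inner_sub_right, hlevel w₀ hw₀AS]; ring
    rw [hrep₀, real_inner_smul_right] at h1
    rcases mul_eq_zero.1 h1 with h | h
    · exfalso; linarith
    · exact h
  refine ⟨hpK, ?_⟩
  intro x1 hx1 x2 hx2 hseg
  -- both endpoints are at level 0 hence equal to p
  obtain ⟨a, b, ha, hb, hab, habp⟩ := hseg
  have hz : ⟪c, x1⟫ = 0 ∧ ⟪c, x2⟫ = 0 := by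
    have h1 := hKle x1 hx1
    have h2 := hKle x2 hx2
    have : a * ⟪c, x1⟫ + b * ⟪c, x2⟫ = 0 := by
      rw [← hcp0, ← habp, inner_add_right, real_inner_smul_right, real_inner_smul_right]
    constructor <;> nlinarith
  have hAne : (AsetF V c₀ v).Nonempty := ⟨p, hpA⟩
  have hASA : AS (AsetF V c₀ v) c = {p} := by
    apply Finset.eq_singleton_iff_unique_mem.2
    constructor
    · exact mem_AS.2 ⟨hpA, fun z hz' => by rw [hcp0]; exact (hq z hz').1⟩
    · intro q hq'
      have hqA : q ∈ AsetF V c₀ v := AS_subset _ c hq'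
      have : ⟪c, q⟫ = 0 := le_antisymm ((hq q hqA).1)
        (by rw [← hcp0]; exact (mem_AS.1 hq').2 p hpA)
      exact (hq q hqA).2 this
  have hface := face_eq hAne c
  have hx1p : x1 = p := by
    have : x1 ∈ convexHull ℝ (AS (AsetF V c₀ v) c : Set E4) := by
      rw [← hface]
      exact ⟨hx1, fun y hy => by rw [hz.1]; exact hKle y hy⟩
    rw [hASA] at this
    simpa using this
  have hx2p : x2 = p := by
    have : x2 ∈ convexHull ℝ (AS (AsetF V c₀ v) c : Set E4) := by
      rw [← hface]
      exact ⟨hx2, fun y hy => by rw [hz.2]; exact hKle y hy⟩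
    rw [hASA] at this
    simpa using this
  exact ⟨hx1p, hx2p⟩
end B5

section B6
local instance : DecidableEq E4 := Classical.decEq _
variable {V : Finset E4} {c₀ v : E4}

lemma AS_eq_level {c x₀ : E4} (hx₀V : x₀ ∈ V) (hmax : ∀ u ∈ V, ⟪c, u⟫ ≤ ⟪c, x₀⟫) (w : E4) :
    w ∈ AS V c ↔ w ∈ V ∧ ⟪c, w⟫ = ⟪c, x₀⟫ := by
  rw [mem_AS]
  constructor
  · rintro ⟨hw, hmax'⟩
    exact ⟨hw, le_antisymm (hmax w hw) (hmax' x₀ hx₀V)⟩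
  · rintro ⟨hw, hlev⟩
    exact ⟨hw, fun u hu => by rw [hlev]; exact hmax u hu⟩

/-- the edge faces at a vertex `v` are in bijection with `ExtF V c₀ v`. -/
lemma edges_card (hv : AS V c₀ = {v}) :
    Nat.card {e : Set E4 // IsFaceOf (convexHull ℝ (V : Set E4)) e ∧ faceDim e = 1 ∧
      ({v} : Set E4) ⊆ e} = (ExtF V c₀ v).card := by
  have hVn : V.Nonempty := hVne hv
  have hmk : ∀ p : {p // p ∈ ExtF V c₀ v},
      IsFaceOf (convexHull ℝ (V : Set E4))
        (convexHull ℝ ((insert v (Rp V v p.1) : Finset E4) : Set E4)) ∧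
      faceDim (convexHull ℝ ((insert v (Rp V v p.1) : Finset E4) : Set E4)) = 1 ∧
      ({v} : Set E4) ⊆ convexHull ℝ ((insert v (Rp V v p.1) : Finset E4) : Set E4) := by
    rintro ⟨p, hp⟩
    obtain ⟨⟨c, hc⟩, hne, hdim⟩ := edge_of_ext hv hp
    refine ⟨(isFaceOf_iff hVn _).2 ⟨c, by rw [hc]⟩, hdim, ?_⟩
    rw [Set.singleton_subset_iff]
    exact subset_convexHull ℝ _ (Finset.mem_coe.2 (Finset.mem_insert_self v _))
  set f : {p // p ∈ ExtF V c₀ v} →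
      {e : Set E4 // IsFaceOf (convexHull ℝ (V : Set E4)) e ∧ faceDim e = 1 ∧
        ({v} : Set E4) ⊆ e} :=
    fun p => ⟨convexHull ℝ ((insert v (Rp V v p.1) : Finset E4) : Set E4), hmk p⟩ with hf
  have hbij : Function.Bijective f := by
    constructor
    · rintro ⟨p, hp⟩ ⟨p', hp'⟩ heq
      have hconv : convexHull ℝ ((insert v (Rp V v p) : Finset E4) : Set E4)
          = convexHull ℝ ((insert v (Rp V v p') : Finset E4) : Set E4) := by
        have := congrArg Subtype.val heq
        simpa [hf] using this
      obtain ⟨⟨c, hc⟩, -, -⟩ := edge_of_ext hv hp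
      obtain ⟨⟨c', hc'⟩, -, -⟩ := edge_of_ext hv hp'
      have hSets : (insert v (Rp V v p) : Finset E4) = insert v (Rp V v p') := by
        have h1 := conv_AS_inter_V hVn c
        have h2 := conv_AS_inter_V hVn c'
        rw [hc] at h1; rw [hc'] at h2
        rw [← hconv] at h2
        have := h1.symm.trans h2
        exact_mod_cast Finset.coe_injective (by rw [← h1, ← h2])
      -- recover p = p'
      have hpA : p ∈ AsetF V c₀ v := ExtF_subset_AsetF hp
      have hp'A : p' ∈ AsetF V c₀ v := ExtF_subset_AsetF hp'
      obtain ⟨w₁, hw₁V, hw₁v, hw₁p⟩ := mem_AsetF_iff.1 hpA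
      have hw₁R : w₁ ∈ Rp V v p := (mem_Rp_iff hv hpA).2 ⟨hw₁V, hw₁v, hw₁p⟩
      have : w₁ ∈ insert v (Rp V v p') := by
        rw [← hSets]; exact Finset.mem_insert_of_mem hw₁R
      rcases Finset.mem_insert.1 this with h | h
      · exact absurd h hw₁v
      · have := ((mem_Rp_iff hv hp'A).1 h).2.2
        apply Subtype.ext
        show p = p'
        rw [← hw₁p, this]
    · rintro ⟨e, he, hdim, hsub⟩
      obtain ⟨c, hc⟩ := (isFaceOf_iff hVn e).1 he
      have hvAS : v ∈ AS V c := by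
        have hve : v ∈ e := Set.singleton_subset_iff.1 hsub
        have := conv_AS_inter_V hVn c
        rw [← hc] at this
        have : v ∈ e ∩ (V : Set E4) := ⟨hve, Finset.mem_coe.2 (vmem hv)⟩
        rw [hc] at this
        rw [conv_AS_inter_V hVn c] at this
        exact Finset.mem_coe.1 this
      have hdim' : faceDim (convexHull ℝ (AS V c : Set E4)) = 1 := by rw [← hc]; exact hdim
      obtain ⟨p, hpE, hASc⟩ := ext_of_edge hv hvAS hdim'
      refine ⟨⟨p, hpE⟩, ?_⟩
      apply Subtype.ext
      show convexHull ℝ ((insert v (Rp V v p) : Finset E4) : Set E4) = e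
      rw [← hASc, ← hc]
  rw [Nat.card_congr (Equiv.ofBijective f hbij).symm, Nat.card_congr (Equiv.subtypeEquivRight
    (fun p => Iff.rfl))]
  exact Nat.card_eq_finsetCard _
end B6

section B7
local instance : DecidableEq E4 := Classical.decEq _
variable {V : Finset E4} {c₀ v : E4}

set_option maxHeartbeats 1000000 in
lemma vertex_local (hsp : affineSpan ℝ ((V : Set E4)) = ⊤) (hv : AS V c₀ = {v})
    {cs : E4} (hcs : ∀ w ∈ V, ∀ w' ∈ V, ⟪cs, w⟫ = ⟪cs, w'⟫ → w = w')
    (hE4 : (ExtF V c₀ v).card = 4) :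
    ∃ (D : Finset E4) (Φ : Finset E4 → Set E4),
      D.card ≤ 4 ∧
      ((∀ w ∈ V, w ≠ v → ⟪cs, w⟫ < ⟪cs, v⟫) → D.card = 4) ∧
      (∀ T ⊆ D, IsFaceOf (convexHull ℝ (V : Set E4)) (Φ T) ∧ faceDim (Φ T) = T.card ∧
        v ∈ Φ T ∧ (∀ w ∈ V, w ∈ Φ T → w ≠ v → ⟪cs, w⟫ < ⟪cs, v⟫)) ∧
      (∀ T ⊆ D, ∀ T' ⊆ D, Φ T = Φ T' → T = T') ∧
      (∀ F, IsFaceOf (convexHull ℝ (V : Set E4)) F → v ∈ F →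
        (∀ w ∈ V, w ∈ F → w ≠ v → ⟪cs, w⟫ < ⟪cs, v⟫) → ∃ T, T ⊆ D ∧ F = Φ T) := by
  classical
  have hVn : V.Nonempty := hVne hv
  have hvV : v ∈ V := vmem hv
  -- the span of the extreme directions is everything
  have hspanE : Submodule.span ℝ ((ExtF V c₀ v : Finset E4) : Set E4) = ⊤ := by
    have h1 : vectorSpan ℝ (V : Set E4) = ⊤ := by
      rw [← direction_affineSpan, hsp]
      exact AffineSubspace.direction_top ℝ E4 E4
    rw [eq_top_iff, ← h1, vectorSpan_finset_eq_span hvV, Submodule.span_le]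
    rintro x ⟨w, hw, rfl⟩
    rw [SetLike.mem_coe]
    show w - v ∈ _
    rw [Finset.mem_coe] at hw
    by_cases hwv : w = v
    · subst hwv; simp
    · have hu : uh c₀ v w ∈ convexHull ℝ ((ExtF V c₀ v : Finset E4) : Set E4) := by
        rw [← KK_eq_conv_ExtF]
        exact subset_convexHull ℝ _ (Finset.mem_coe.2 (mem_AsetF_iff.2 ⟨w, hw, hwv, rfl⟩))
      have hsubspan : convexHull ℝ ((ExtF V c₀ v : Finset E4) : Set E4)
          ⊆ (Submodule.span ℝ ((ExtF V c₀ v : Finset E4) : Set E4) : Set E4) :=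
        convexHull_min Submodule.subset_span (Submodule.span ℝ _).convex
      have hmem := hsubspan hu
      rw [(uh_spec hv hw hwv).1]
      exact Submodule.smul_mem _ _ hmem
  have hfr : Module.finrank ℝ E4 = 4 := finrank_euclideanSpace_fin
  haveI hne4 : Nonempty {x // x ∈ ExtF V c₀ v} := by
    have : 0 < (ExtF V c₀ v).card := by rw [hE4]; norm_num
    obtain ⟨p, hp⟩ := Finset.card_pos.1 this
    exact ⟨⟨p, hp⟩⟩
  have hcard : Fintype.card {x // x ∈ ExtF V c₀ v} = Module.finrank ℝ E4 := by
    rw [Fintype.card_coe, hE4, hfr]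
  have hli : LinearIndependent ℝ (fun i : {x // x ∈ ExtF V c₀ v} => (i : E4)) := by
    apply linearIndependent_of_top_le_span_of_card_eq_finrank _ hcard
    have hrange : Set.range (fun i : {x // x ∈ ExtF V c₀ v} => (i : E4))
        = ((ExtF V c₀ v : Finset E4) : Set E4) := by
      rw [Subtype.range_coe_subtype]; ext x; simp
    rw [hrange, hspanE]
  set b := basisOfLinearIndependentOfCardEqFinrank hli hcard with hbdef
  have hb : ∀ i, b i = (i : E4) := fun i => by
    rw [hbdef, coe_basisOfLinearIndependentOfCardEqFinrank]
  have hexp : ∀ x : E4, x = ∑ i : {x // x ∈ ExtF V c₀ v}, b.repr x i • (i : E4) := by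
    intro x
    conv_lhs => rw [← b.sum_repr x]
    exact Finset.sum_congr rfl fun i _ => by rw [hb]
  -- nonnegativity of coordinates of points of V
  have hpos : ∀ w ∈ V, ∀ i, 0 ≤ b.repr (w - v) i := by
    intro w hw i
    by_cases hwv : w = v
    · subst hwv; simp
    · have hu : uh c₀ v w ∈ convexHull ℝ ((ExtF V c₀ v : Finset E4) : Set E4) := by
        rw [← KK_eq_conv_ExtF]
        exact subset_convexHull ℝ _ (Finset.mem_coe.2 (mem_AsetF_iff.2 ⟨w, hw, hwv, rfl⟩))
      rw [Finset.convexHull_eq] at hu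
      obtain ⟨lam, hlam0, hlam1, hcm⟩ := hu
      have hs : 0 < -(⟪c₀, w - v⟫) := sc_pos hv hw hwv
      have h1 : w - v = ∑ q ∈ ExtF V c₀ v, ((-(⟪c₀, w - v⟫)) * lam q) • q := by
        conv_lhs => rw [(uh_spec hv hw hwv).1]
        rw [← hcm, Finset.centerMass, hlam1, inv_one, one_smul, Finset.smul_sum]
        exact Finset.sum_congr rfl fun q _ => by rw [smul_smul]; rfl
      have hwv' : (∑ i : {x // x ∈ ExtF V c₀ v},
          (fun j : {x // x ∈ ExtF V c₀ v} => (-(⟪c₀, w - v⟫)) * lam j.1) i • b i)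
          = w - v := by
        conv_rhs => rw [h1, ← Finset.sum_attach (ExtF V c₀ v)
          (fun q => ((-(⟪c₀, w - v⟫)) * lam q) • q), ← Finset.univ_eq_attach]
        exact Finset.sum_congr rfl fun i _ => by simp only [hb]
      have hco := b.repr_sum_self (fun j : {x // x ∈ ExtF V c₀ v} => (-(⟪c₀, w - v⟫)) * lam j.1)
      rw [hwv'] at hco
      rw [congrFun hco i]
      exact mul_nonneg hs.le (hlam0 _ i.2)
  -- ray witnesses
  have hw₁WT : ∀ (i : {x // x ∈ ExtF V c₀ v}), ∃ w₁ s, 0 < s ∧ w₁ ∈ V ∧ w₁ ≠ v ∧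
      w₁ - v = s • (i : E4) ∧
      ⇑(b.repr (w₁ - v)) = fun j => if j = i then s else 0 := by
    intro i
    obtain ⟨w₁, hw₁V, hw₁v, hw₁p⟩ := mem_AsetF_iff.1 (ExtF_subset_AsetF i.2)
    have hs : 0 < -(⟪c₀, w₁ - v⟫) := sc_pos hv hw₁V hw₁v
    have hrep : w₁ - v = (-(⟪c₀, w₁ - v⟫)) • (i : E4) := by
      conv_lhs => rw [(uh_spec hv hw₁V hw₁v).1]
      rw [hw₁p]
    refine ⟨w₁, -(⟪c₀, w₁ - v⟫), hs, hw₁V, hw₁v, hrep, ?_⟩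
    have hsum : ∑ j : {x // x ∈ ExtF V c₀ v},
        (fun j : {x // x ∈ ExtF V c₀ v} =>
          if j = i then -(⟪c₀, w₁ - v⟫) else 0) j • b j = w₁ - v := by
      have hstep : ∀ j : {x // x ∈ ExtF V c₀ v},
          (if j = i then -(⟪c₀, w₁ - v⟫) else 0) • b j
          = if j = i then (-(⟪c₀, w₁ - v⟫)) • b i else 0 := by
        intro j
        by_cases h : j = i
        · rw [if_pos h, if_pos h, h]
        · rw [if_neg h, if_neg h, zero_smul]
      rw [Finset.sum_congr rfl fun j _ => hstep j, Finset.sum_ite_eq' Finset.univ i]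
      rw [if_pos (Finset.mem_univ i), hb]
      exact hrep.symm
    have hco := b.repr_sum_self (fun j : {x // x ∈ ExtF V c₀ v} =>
      if j = i then -(⟪c₀, w₁ - v⟫) else 0)
    rw [hsum] at hco
    exact hco
  set WT : Finset E4 → Finset E4 := fun T =>
    V.filter (fun w => ∀ i : {x // x ∈ ExtF V c₀ v}, (i : E4) ∉ T → b.repr (w - v) i = 0)
    with hWTdef
  have hmemWT : ∀ T w, w ∈ WT T ↔ w ∈ V ∧
      ∀ i : {x // x ∈ ExtF V c₀ v}, (i : E4) ∉ T → b.repr (w - v) i = 0 :=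
    fun T w => Finset.mem_filter
  have hvWT : ∀ T, v ∈ WT T := fun T => (hmemWT T v).2 ⟨hvV, fun i _ => by simp⟩
  have hinner : ∀ (c w : E4), ⟪c, w - v⟫
      = ∑ i : {x // x ∈ ExtF V c₀ v}, b.repr (w - v) i * ⟪c, (i : E4)⟫ := by
    intro c w
    conv_lhs => rw [hexp (w - v)]
    rw [inner_sum]
    exact Finset.sum_congr rfl fun i _ => by rw [real_inner_smul_right]
  -- each WT T is an argmax set
  have hASWT : ∀ T : Finset E4, ∃ c, AS V c = WT T := by
    intro T
    set g : E4 →ₗ[ℝ] ℝ :=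
      ∑ i : {x // x ∈ ExtF V c₀ v},
        (if (i : E4) ∈ T then (0 : E4 →ₗ[ℝ] ℝ) else -(b.coord i)) with hg
    set cT : E4 := (InnerProductSpace.toDual ℝ E4).symm
      (LinearMap.toContinuousLinearMap g) with hcTdef
    have hcTval : ∀ x : E4, ⟪cT, x⟫
        = ∑ i : {x // x ∈ ExtF V c₀ v}, (if (i : E4) ∈ T then 0 else -(b.repr x i)) := by
      intro x
      rw [hcTdef, InnerProductSpace.toDual_symm_apply]
      have h1 : (LinearMap.toContinuousLinearMap g) x = g x := by
        rw [LinearMap.coe_toContinuousLinearMap']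
      rw [h1, hg, LinearMap.sum_apply]
      refine Finset.sum_congr rfl fun i _ => ?_
      by_cases h : (i : E4) ∈ T <;> simp [h, Module.Basis.coord_apply]
    have hle : ∀ w ∈ V, ⟪cT, w - v⟫ ≤ 0 := by
      intro w hw
      rw [hcTval]
      apply Finset.sum_nonpos
      intro i _
      by_cases h : (i : E4) ∈ T
      · simp [h]
      · simp only [h, if_false]
        exact neg_nonpos.2 (hpos w hw i)
    have hiff : ∀ w ∈ V, (⟪cT, w - v⟫ = 0 ↔ w ∈ WT T) := by
      intro w hw
      rw [hcTval]
      have hsum : (∑ i : {x // x ∈ ExtF V c₀ v},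
          (if (i : E4) ∈ T then (0:ℝ) else -(b.repr (w - v) i)))
          = -(∑ i : {x // x ∈ ExtF V c₀ v},
            (if (i : E4) ∈ T then (0:ℝ) else b.repr (w - v) i)) := by
        rw [← Finset.sum_neg_distrib]
        refine Finset.sum_congr rfl fun i _ => ?_
        by_cases h : (i : E4) ∈ T <;> simp [h]
      have hnn : ∀ i ∈ (Finset.univ : Finset {x // x ∈ ExtF V c₀ v}),
          (0:ℝ) ≤ if (i : E4) ∈ T then 0 else b.repr (w - v) i := by
        intro i _
        by_cases h : (i : E4) ∈ T
        · rw [if_pos h]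
        · rw [if_neg h]; exact hpos w hw i
      rw [hsum, neg_eq_zero, Finset.sum_eq_zero_iff_of_nonneg hnn]
      constructor
      · intro hall
        refine (hmemWT T w).2 ⟨hw, fun i hiT => ?_⟩
        have := hall i (Finset.mem_univ i)
        simpa [hiT] using this
      · intro hwWT i _
        by_cases h : (i : E4) ∈ T
        · simp [h]
        · simp only [h, if_false]
          exact ((hmemWT T w).1 hwWT).2 i h
    refine ⟨cT, ?_⟩
    ext w
    rw [AS_eq_level hvV (fun u hu => by
      have := hle u hu; rw [inner_sub_right] at this; linarith) w]
    constructor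
    · rintro ⟨hw, hlev⟩
      refine (hiff w hw).1 ?_
      rw [inner_sub_right]; linarith
    · intro hwWT
      have hw : w ∈ V := ((hmemWT T w).1 hwWT).1
      refine ⟨hw, ?_⟩
      have := (hiff w hw).2 hwWT
      rw [inner_sub_right] at this; linarith
  have hconvWT : ∀ T, convexHull ℝ (WT T : Set E4) ∩ V = (WT T : Set E4) := by
    intro T
    obtain ⟨c, hc⟩ := hASWT T
    have := conv_AS_inter_V hVn c
    rwa [hc] at this
  -- span of a face
  have hWTspan : ∀ T, T ⊆ ExtF V c₀ v →
      vectorSpan ℝ (WT T : Set E4) = Submodule.span ℝ (T : Set E4) := by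
    intro T hT
    rw [vectorSpan_finset_eq_span (hvWT T)]
    apply le_antisymm
    · rw [Submodule.span_le]
      rintro x ⟨w, hw, rfl⟩
      rw [SetLike.mem_coe]
      show w - v ∈ _
      rw [Finset.mem_coe] at hw
      have hwWT := (hmemWT T w).1 hw
      rw [hexp (w - v)]
      apply Submodule.sum_mem
      intro i _
      by_cases h : (i : E4) ∈ T
      · exact Submodule.smul_mem _ _ (Submodule.subset_span (Finset.mem_coe.2 h))
      · rw [hwWT.2 i h, zero_smul]
        exact Submodule.zero_mem _
    · rw [Submodule.span_le]
      intro p hp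
      rw [Finset.mem_coe] at hp
      have hpE : p ∈ ExtF V c₀ v := hT hp
      obtain ⟨w₁, s, hs, hw₁V, hw₁v, hrep, hco⟩ := hw₁WT ⟨p, hpE⟩
      have hw₁mem : w₁ ∈ WT T := by
        refine (hmemWT T w₁).2 ⟨hw₁V, fun i hiT => ?_⟩
        rw [congrFun hco i]
        have hne : i ≠ ⟨p, hpE⟩ := by
          intro h; rw [h] at hiT; exact hiT hp
        simp [hne]
      rw [SetLike.mem_coe]
      have hmem := Submodule.subset_span (R := ℝ)
        (s := (fun w => w - v) '' ((WT T : Finset E4) : Set E4))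
        ⟨w₁, Finset.mem_coe.2 hw₁mem, rfl⟩
      have h2 : s⁻¹ • (w₁ - v)
          ∈ Submodule.span ℝ ((fun w => w - v) '' ((WT T : Finset E4) : Set E4)) :=
        Submodule.smul_mem _ s⁻¹ hmem
      rw [hrep, smul_smul, inv_mul_cancel₀ (ne_of_gt hs), one_smul] at h2
      exact h2
  have hdimWT : ∀ T, T ⊆ ExtF V c₀ v →
      faceDim (convexHull ℝ (WT T : Set E4)) = T.card := by
    intro T hT
    rw [faceDim_conv, hWTspan T hT]
    apply finrank_span_finset_eq_card
    have hembinj : Function.Injective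
        (fun i : {x // x ∈ T} => (⟨i.1, hT i.2⟩ : {x // x ∈ ExtF V c₀ v})) := by
      intro i j hij
      simp only [Subtype.mk.injEq] at hij
      exact Subtype.ext hij
    have hcomp := hli.comp _ hembinj
    exact hcomp
  -- the down set
  set D : Finset E4 := (ExtF V c₀ v).filter (fun p => ⟪cs, p⟫ < 0) with hD
  have hDsub : D ⊆ ExtF V c₀ v := Finset.filter_subset _ _
  have hmemD : ∀ p, p ∈ D ↔ p ∈ ExtF V c₀ v ∧ ⟪cs, p⟫ < 0 := fun p => Finset.mem_filter
  have hstrictWT : ∀ T, T ⊆ D → ∀ w ∈ WT T, w ≠ v → ⟪cs, w⟫ < ⟪cs, v⟫ := by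
    intro T hTD w hw hwv
    have hwV := ((hmemWT T w).1 hw).1
    have hex : ∃ i, b.repr (w - v) i ≠ 0 := by
      by_contra hall
      push_neg at hall
      have h0 : w - v = 0 := by
        rw [hexp (w - v)]
        exact Finset.sum_eq_zero fun i _ => by rw [hall i, zero_smul]
      exact hwv (sub_eq_zero.1 h0)
    obtain ⟨i₀, hi₀⟩ := hex
    have hi₀T : (i₀ : E4) ∈ T := by
      by_contra h
      exact hi₀ (((hmemWT T w).1 hw).2 i₀ h)
    have hlt : ⟪cs, w - v⟫ < 0 := by
      rw [hinner cs w]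
      have hle : ∀ i ∈ Finset.univ, b.repr (w - v) i * ⟪cs, (i : E4)⟫ ≤ (fun _ => (0:ℝ)) i := by
        intro i _
        by_cases h : (i : E4) ∈ T
        · exact mul_nonpos_of_nonneg_of_nonpos (hpos w hwV i) ((hmemD _).1 (hTD h)).2.le
        · rw [((hmemWT T w).1 hw).2 i h, zero_mul]
      have hone : ∃ i ∈ Finset.univ, b.repr (w - v) i * ⟪cs, (i : E4)⟫ < (fun _ => (0:ℝ)) i := by
        refine ⟨i₀, Finset.mem_univ _, ?_⟩
        have h0 : 0 < b.repr (w - v) i₀ := lt_of_le_of_ne (hpos w hwV i₀) (Ne.symm hi₀)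
        have hneg := ((hmemD _).1 (hTD hi₀T)).2
        exact mul_neg_of_pos_of_neg h0 hneg
      have := Finset.sum_lt_sum hle hone
      simpa using this
    rw [inner_sub_right] at hlt; linarith
  -- injectivity
  have hkeyinj : ∀ (T1 T2 : Finset E4), T1 ⊆ D → WT T1 = WT T2 → T1 ⊆ T2 := by
    intro T1 T2 hT1 heq p hp
    have hpE : p ∈ ExtF V c₀ v := hDsub (hT1 hp)
    obtain ⟨w₁, s, hs, hw₁V, hw₁v, hrep, hco⟩ := hw₁WT ⟨p, hpE⟩
    have hw₁T1 : w₁ ∈ WT T1 := by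
      refine (hmemWT T1 w₁).2 ⟨hw₁V, fun i hiT => ?_⟩
      rw [congrFun hco i]
      have hne : i ≠ ⟨p, hpE⟩ := by
        intro h; rw [h] at hiT; exact hiT hp
      simp [hne]
    rw [heq] at hw₁T1
    by_contra hpT2
    have := ((hmemWT T2 w₁).1 hw₁T1).2 ⟨p, hpE⟩ hpT2
    rw [congrFun hco ⟨p, hpE⟩] at this
    simp at this
    exact (ne_of_gt hs) this
  -- P2
  have hP2 : ∀ F, IsFaceOf (convexHull ℝ (V : Set E4)) F → v ∈ F →
      (∀ w ∈ V, w ∈ F → w ≠ v → ⟪cs, w⟫ < ⟪cs, v⟫) →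
      ∃ T, T ⊆ D ∧ F = convexHull ℝ (WT T : Set E4) := by
    intro F hF hvF hstr
    obtain ⟨c, hc⟩ := (isFaceOf_iff hVn F).1 hF
    have hvAS : v ∈ AS V c := by
      have h1 := conv_AS_inter_V hVn c
      have h2 : v ∈ F ∩ (V : Set E4) := ⟨hvF, Finset.mem_coe.2 hvV⟩
      rw [hc, h1] at h2
      exact Finset.mem_coe.1 h2
    have hmax : ∀ u ∈ V, ⟪c, u⟫ ≤ ⟪c, v⟫ := (mem_AS.1 hvAS).2
    have hγ : ∀ i : {x // x ∈ ExtF V c₀ v}, ⟪c, (i : E4)⟫ ≤ 0 := by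
      intro i
      obtain ⟨w₁, s, hs, hw₁V, hw₁v, hrep, hco⟩ := hw₁WT i
      have h1 : ⟪c, w₁ - v⟫ ≤ 0 := by
        rw [inner_sub_right]; linarith [hmax w₁ hw₁V]
      rw [hrep, real_inner_smul_right] at h1
      nlinarith
    set T : Finset E4 := (ExtF V c₀ v).filter (fun p => ⟪c, p⟫ = 0) with hTdef
    have hmemT : ∀ p, p ∈ T ↔ p ∈ ExtF V c₀ v ∧ ⟪c, p⟫ = 0 := fun p => Finset.mem_filter
    have hTD : T ⊆ D := by
      intro p hp
      obtain ⟨hpE, hp0⟩ := (hmemT p).1 hp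
      obtain ⟨w₁, s, hs, hw₁V, hw₁v, hrep, hco⟩ := hw₁WT ⟨p, hpE⟩
      have hw₁AS : w₁ ∈ AS V c := by
        rw [AS_eq_level hvV hmax]
        refine ⟨hw₁V, ?_⟩
        have h1 : ⟪c, w₁ - v⟫ = 0 := by
          rw [hrep, real_inner_smul_right]
          show s * ⟪c, p⟫ = 0
          rw [hp0, mul_zero]
        rw [inner_sub_right] at h1; linarith
      have hw₁F : w₁ ∈ F := by
        rw [hc]
        exact subset_convexHull ℝ _ (Finset.mem_coe.2 hw₁AS)
      have hlt := hstr w₁ hw₁V hw₁F hw₁v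
      have h2 : ⟪cs, w₁ - v⟫ < 0 := by rw [inner_sub_right]; linarith
      rw [hrep, real_inner_smul_right] at h2
      refine (hmemD p).2 ⟨hpE, ?_⟩
      nlinarith
    have hASWTeq : AS V c = WT T := by
      ext w
      rw [AS_eq_level hvV hmax w]
      constructor
      · rintro ⟨hw, hlev⟩
        refine (hmemWT T w).2 ⟨hw, fun i hiT => ?_⟩
        have hzero : ⟪c, w - v⟫ = 0 := by rw [inner_sub_right]; linarith
        rw [hinner c w] at hzero
        have hterms : ∀ i ∈ Finset.univ, b.repr (w - v) i * ⟪c, (i : E4)⟫ ≤ 0 :=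
          fun i _ => mul_nonpos_of_nonneg_of_nonpos (hpos w hw i) (hγ i)
        have hsum0 : ∑ i : {x // x ∈ ExtF V c₀ v},
            -(b.repr (w - v) i * ⟪c, (i : E4)⟫) = 0 := by
          rw [Finset.sum_neg_distrib, hzero, neg_zero]
        have hall := (Finset.sum_eq_zero_iff_of_nonneg
          (fun i hi => by linarith [hterms i hi])).1 hsum0 i (Finset.mem_univ i)
        have hzeroterm : b.repr (w - v) i * ⟪c, (i : E4)⟫ = 0 := by linarith
        have hne : ⟪c, (i : E4)⟫ ≠ 0 := fun h0 => hiT ((hmemT _).2 ⟨i.2, h0⟩)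
        rcases mul_eq_zero.1 hzeroterm with h | h
        · exact h
        · exact absurd h hne
      · intro hwWT
        have hw : w ∈ V := ((hmemWT T w).1 hwWT).1
        refine ⟨hw, ?_⟩
        have h0 : ⟪c, w - v⟫ = 0 := by
          rw [hinner c w]
          apply Finset.sum_eq_zero
          intro i _
          by_cases h : (i : E4) ∈ T
          · rw [((hmemT _).1 h).2, mul_zero]
          · rw [((hmemWT T w).1 hwWT).2 i h, zero_mul]
        rw [inner_sub_right] at h0; linarith
    exact ⟨T, hTD, by rw [hc, hASWTeq]⟩
  -- P3: if v is the global top, every direction is a down direction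
  have hcard4 : (∀ w ∈ V, w ≠ v → ⟪cs, w⟫ < ⟪cs, v⟫) → D.card = 4 := by
    intro htop
    have hDE : D = ExtF V c₀ v := by
      apply Finset.Subset.antisymm hDsub
      intro p hp
      obtain ⟨w₁, s, hs, hw₁V, hw₁v, hrep, hco⟩ := hw₁WT ⟨p, hp⟩
      have hlt := htop w₁ hw₁V hw₁v
      have h2 : ⟪cs, w₁ - v⟫ < 0 := by rw [inner_sub_right]; linarith
      rw [hrep, real_inner_smul_right] at h2
      exact (hmemD p).2 ⟨hp, by nlinarith⟩
    rw [hDE, hE4]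
  -- assemble
  refine ⟨D, fun T => convexHull ℝ (WT T : Set E4), ?_, hcard4, ?_, ?_, hP2⟩
  · calc D.card ≤ (ExtF V c₀ v).card := Finset.card_le_card hDsub
      _ = 4 := hE4
  · intro T hTD
    obtain ⟨c, hc⟩ := hASWT T
    refine ⟨(isFaceOf_iff hVn _).2 ⟨c, by
      show convexHull ℝ (WT T : Set E4) = convexHull ℝ (AS V c : Set E4)
      rw [hc]⟩, hdimWT T (hTD.trans hDsub),
      subset_convexHull ℝ _ (Finset.mem_coe.2 (hvWT T)), ?_⟩
    intro w hwV hwΦ hwv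
    have hwWT : w ∈ WT T := by
      have hmem : w ∈ convexHull ℝ (WT T : Set E4) ∩ V := ⟨hwΦ, Finset.mem_coe.2 hwV⟩
      rw [hconvWT T] at hmem
      exact Finset.mem_coe.1 hmem
    exact hstrictWT T hTD w hwWT hwv
  · intro T hTD T' hTD' hconv
    have hconv' : convexHull ℝ (WT T : Set E4) = convexHull ℝ (WT T' : Set E4) := hconv
    have hWTeq : WT T = WT T' := by
      have h1 := hconvWT T
      have h2 := hconvWT T'
      rw [hconv'] at h1
      exact Finset.coe_injective (h1.symm.trans h2)
    exact Finset.Subset.antisymm (hkeyinj T T' hTD hWTeq) (hkeyinj T' T hTD' hWTeq.symm)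
end B7

section B8
local instance : DecidableEq E4 := Classical.decEq _

lemma exists_nonzero_functional (Z : Finset E4) :
    (∀ z ∈ Z, z ≠ 0) → ∃ cs : E4, ∀ z ∈ Z, ⟪cs, z⟫ ≠ 0 := by
  classical
  induction Z using Finset.induction with
  | empty => exact fun _ => ⟨0, by simp⟩
  | @insert a s ha ih =>
    intro hZ
    obtain ⟨cs, hcs⟩ := ih (fun z hz => hZ z (Finset.mem_insert_of_mem hz))
    have hane : a ≠ 0 := hZ a (Finset.mem_insert_self a s)
    set bad : Finset ℝ :=
      insert 0 ((insert a s).image (fun z => -(⟪cs, z⟫) / ⟪a, z⟫)) with hbad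
    obtain ⟨ε, hε⟩ := Infinite.exists_notMem_finset bad
    have hε0 : ε ≠ 0 := fun h => hε (by rw [hbad, h]; exact Finset.mem_insert_self 0 _)
    refine ⟨cs + ε • a, fun z hz h0 => ?_⟩
    rw [inner_add_left, real_inner_smul_left] at h0
    by_cases haz : ⟪a, z⟫ = 0
    · rcases Finset.mem_insert.1 hz with rfl | hzs
      · exact hane (inner_self_eq_zero.1 haz)
      · rw [haz, mul_zero, add_zero] at h0
        exact hcs z hzs h0
    · apply hε
      rw [hbad]
      apply Finset.mem_insert_of_mem
      have hval : ε = -(⟪cs, z⟫) / ⟪a, z⟫ := by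
        rw [eq_div_iff haz]
        linarith
      rw [hval]
      exact Finset.mem_image_of_mem _ hz

lemma exists_generic (V : Finset E4) :
    ∃ cs : E4, ∀ w ∈ V, ∀ w' ∈ V, ⟪cs, w⟫ = ⟪cs, w'⟫ → w = w' := by
  classical
  set Z : Finset E4 := ((V ×ˢ V).filter (fun p : E4 × E4 => p.1 ≠ p.2)).image (fun p : E4 × E4 => p.1 - p.2) with hZ
  have hZne : ∀ z ∈ Z, z ≠ 0 := by
    intro z hz
    rw [hZ, Finset.mem_image] at hz
    obtain ⟨p, hp, rfl⟩ := hz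
    exact sub_ne_zero.2 (Finset.mem_filter.1 hp).2
  obtain ⟨cs, hcs⟩ := exists_nonzero_functional Z hZne
  refine ⟨cs, fun w hw w' hw' heq => ?_⟩
  by_contra hne
  have hmem : w - w' ∈ Z := by
    rw [hZ]
    have hpair : (w, w') ∈ (V ×ˢ V).filter (fun p : E4 × E4 => p.1 ≠ p.2) := by
      rw [Finset.mem_filter]
      refine ⟨Finset.mem_product.2 ⟨hw, hw'⟩, ?_⟩
      exact hne
    exact Finset.mem_image_of_mem (fun p : E4 × E4 => p.1 - p.2) hpair
  apply hcs _ hmem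
  rw [inner_sub_right]
  linarith [heq]

/-- every nonempty exposed face has a unique top vertex. -/
lemma exists_top {V : Finset E4} (hVn : V.Nonempty) {cs : E4}
    (hcs : ∀ w ∈ V, ∀ w' ∈ V, ⟪cs, w⟫ = ⟪cs, w'⟫ → w = w')
    {F : Set E4} (hF : IsFaceOf (convexHull ℝ (V : Set E4)) F) :
    ∃ v, (v ∈ V ∧ ∃ c₀, AS V c₀ = {v}) ∧ v ∈ F ∧
      (∀ w ∈ V, w ∈ F → w ≠ v → ⟪cs, w⟫ < ⟪cs, v⟫) := by
  obtain ⟨c, hc⟩ := (isFaceOf_iff hVn F).1 hF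
  have hAne : (AS V c).Nonempty := AS_nonempty hVn c
  obtain ⟨v, hvA, hvmax⟩ := (AS V c).exists_max_image (fun w => ⟪cs, w⟫) hAne
  have hvV : v ∈ V := AS_subset V c hvA
  have hstrict : ∀ w ∈ AS V c, w ≠ v → ⟪cs, w⟫ < ⟪cs, v⟫ := by
    intro w hw hwv
    rcases lt_or_eq_of_le (hvmax w hw) with h | h
    · exact h
    · exact absurd (hcs w (AS_subset V c hw) v hvV h) hwv
  have hsingle : AS (AS V c) cs = {v} := by
    apply Finset.eq_singleton_iff_unique_mem.2
    constructor
    · exact mem_AS.2 ⟨hvA, hvmax⟩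
    · intro u hu
      by_contra huv
      have h1 := (mem_AS.1 hu).2 v hvA
      have h2 := hstrict u (AS_subset _ cs hu) huv
      linarith
  obtain ⟨c', hc'⟩ := exists_pert hVn c cs
  rw [hsingle] at hc'
  refine ⟨v, ⟨hvV, c', hc'⟩, ?_, ?_⟩
  · rw [hc]
    exact subset_convexHull ℝ _ (Finset.mem_coe.2 hvA)
  · intro w hwV hwF hwv
    have hwA : w ∈ AS V c := by
      have hmem : w ∈ F ∩ (V : Set E4) := ⟨hwF, Finset.mem_coe.2 hwV⟩
      rw [hc, conv_AS_inter_V hVn c] at hmem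
      exact Finset.mem_coe.1 hmem
    exact hstrict w hwA hwv

theorem main_count (V : Finset E4) (hsp : affineSpan ℝ (V : Set E4) = ⊤)
    (hs : SimplePolytope (convexHull ℝ (V : Set E4))) :
    (fVec (convexHull ℝ (V : Set E4)) 1 : ℝ) + (fVec (convexHull ℝ (V : Set E4)) 2 : ℝ)
      < 3 * ((fVec (convexHull ℝ (V : Set E4)) 0 : ℝ)
        + (fVec (convexHull ℝ (V : Set E4)) 3 : ℝ)) := by
  classical
  have hVn : V.Nonempty := by
    by_contra h
    rw [Finset.not_nonempty_iff_eq_empty] at h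
    subst h
    rw [Finset.coe_empty, AffineSubspace.span_empty] at hsp
    exact bot_ne_top hsp
  obtain ⟨cs, hcs⟩ := exists_generic V
  set P := convexHull ℝ (V : Set E4) with hPdef
  set Vtx : Finset E4 := V.filter (fun v => ∃ c₀, AS V c₀ = {v}) with hVtx
  have hmemVtx : ∀ v, v ∈ Vtx ↔ v ∈ V ∧ ∃ c₀, AS V c₀ = {v} := fun v => Finset.mem_filter
  -- each vertex gives a singleton face, so `hs` applies
  have hvface : ∀ v ∈ Vtx, IsFaceOf P ({v} : Set E4) := by
    intro v hv
    obtain ⟨hvV, c₀, hc₀⟩ := (hmemVtx v).1 hv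
    refine (isFaceOf_iff hVn _).2 ⟨c₀, ?_⟩
    rw [hc₀, Finset.coe_singleton, convexHull_singleton]
  have hedges4 : ∀ v ∈ Vtx, ∀ c₀, AS V c₀ = {v} → (ExtF V c₀ v).card = 4 := by
    intro v hv c₀ hc₀
    rw [← edges_card hc₀]
    exact hs {v} (hvface v hv) (faceDim_singleton v)
  -- local data at each vertex
  have hloc : ∀ v, v ∈ Vtx →
      ∃ (D : Finset E4) (Φ : Finset E4 → Set E4),
      D.card ≤ 4 ∧
      ((∀ w ∈ V, w ≠ v → ⟪cs, w⟫ < ⟪cs, v⟫) → D.card = 4) ∧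
      (∀ T ⊆ D, IsFaceOf P (Φ T) ∧ faceDim (Φ T) = T.card ∧
        v ∈ Φ T ∧ (∀ w ∈ V, w ∈ Φ T → w ≠ v → ⟪cs, w⟫ < ⟪cs, v⟫)) ∧
      (∀ T ⊆ D, ∀ T' ⊆ D, Φ T = Φ T' → T = T') ∧
      (∀ F, IsFaceOf P F → v ∈ F →
        (∀ w ∈ V, w ∈ F → w ≠ v → ⟪cs, w⟫ < ⟪cs, v⟫) → ∃ T, T ⊆ D ∧ F = Φ T) := by
    intro v hv
    obtain ⟨hvV, c₀, hc₀⟩ := (hmemVtx v).1 hv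
    exact vertex_local hsp hc₀ hcs (hedges4 v hv c₀ hc₀)
  choose! D Φ hD1 hD2 hD3 hD4 hD5 using hloc
  -- the global top vertex
  obtain ⟨vtop, hvtopA, hvtopmax⟩ := V.exists_max_image (fun w => ⟪cs, w⟫) hVn
  have hvtopstrict : ∀ w ∈ V, w ≠ vtop → ⟪cs, w⟫ < ⟪cs, vtop⟫ := by
    intro w hw hwv
    rcases lt_or_eq_of_le (hvtopmax w hw) with h | h
    · exact h
    · exact absurd (hcs w hw vtop hvtopA h) hwv
  have hvtopVtx : vtop ∈ Vtx := by
    refine (hmemVtx vtop).2 ⟨hvtopA, cs, ?_⟩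
    apply Finset.eq_singleton_iff_unique_mem.2
    refine ⟨mem_AS.2 ⟨hvtopA, hvtopmax⟩, fun u hu => ?_⟩
    by_contra huv
    have h1 := (mem_AS.1 hu).2 vtop hvtopA
    have h2 := hvtopstrict u (AS_subset _ cs hu) huv
    linarith
  -- the count of k-faces
  have hcount : ∀ k : ℕ, fVec P k = ∑ v ∈ Vtx, ((D v).card.choose k) := by
    intro k
    have hmksig : ∀ x : {x // x ∈ Vtx.sigma (fun v => (D v).powersetCard k)},
        IsFaceOf P (Φ x.1.1 x.1.2) ∧ faceDim (Φ x.1.1 x.1.2) = k := by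
      rintro ⟨⟨v, T⟩, hmem⟩
      rw [Finset.mem_sigma] at hmem
      obtain ⟨hv, hT⟩ := hmem
      rw [Finset.mem_powersetCard] at hT
      have := hD3 v hv T hT.1
      exact ⟨this.1, by rw [this.2.1, hT.2]⟩
    set g : {x // x ∈ Vtx.sigma (fun v => (D v).powersetCard k)} →
        {F : Set E4 // IsFaceOf P F ∧ faceDim F = k} :=
      fun x => ⟨Φ x.1.1 x.1.2, hmksig x⟩ with hg
    have hgbij : Function.Bijective g := by
      constructor
      · rintro ⟨⟨v, T⟩, hmem⟩ ⟨⟨v', T'⟩, hmem'⟩ heq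
        rw [Finset.mem_sigma] at hmem hmem'
        obtain ⟨hv, hT⟩ := hmem
        obtain ⟨hv', hT'⟩ := hmem'
        rw [Finset.mem_powersetCard] at hT hT'
        have heqΦ : Φ v T = Φ v' T' := congrArg Subtype.val heq
        have h3 := hD3 v hv T hT.1
        have h3' := hD3 v' hv' T' hT'.1
        have hvv' : v = v' := by
          by_contra hne
          have hv'V : v' ∈ V := ((hmemVtx v').1 hv').1
          have hvV : v ∈ V := ((hmemVtx v).1 hv).1
          have hlt1 := h3.2.2.2 v' hv'V (by rw [heqΦ]; exact h3'.2.2.1) (Ne.symm hne)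
          have hlt2 := h3'.2.2.2 v hvV (by rw [← heqΦ]; exact h3.2.2.1) hne
          linarith
        subst hvv'
        have hTT' : T = T' := hD4 v hv T hT.1 T' hT'.1 heqΦ
        subst hTT'
        rfl
      · rintro ⟨F, hF, hdim⟩
        obtain ⟨v, hvVtx', hvF, hstr⟩ := exists_top hVn hcs hF
        have hvVtx : v ∈ Vtx := (hmemVtx v).2 hvVtx'
        obtain ⟨T, hTD, hFT⟩ := hD5 v hvVtx F hF hvF hstr
        have hTcard : T.card = k := by
          have := (hD3 v hvVtx T hTD).2.1
          rw [← hFT] at this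
          rw [← hdim, this]
        refine ⟨⟨⟨v, T⟩, Finset.mem_sigma.2 ⟨hvVtx,
          Finset.mem_powersetCard.2 ⟨hTD, hTcard⟩⟩⟩, ?_⟩
        apply Subtype.ext
        exact hFT.symm
    rw [fVec, Nat.card_congr (Equiv.ofBijective g hgbij).symm,
      Nat.card_eq_finsetCard, Finset.card_sigma]
    exact Finset.sum_congr rfl fun v _ => Finset.card_powersetCard k (D v)
  -- the final inequality, first in ℕ
  have hnat : fVec P 1 + fVec P 2 < 3 * (fVec P 0 + fVec P 3) := by
    rw [hcount 0, hcount 1, hcount 2, hcount 3, ← Finset.sum_add_distrib,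
      ← Finset.sum_add_distrib, Finset.mul_sum]
    apply Finset.sum_lt_sum
    · intro v hv
      have hm : (D v).card ≤ 4 := hD1 v hv
      set m := (D v).card with hmdef
      interval_cases m <;> decide
    · refine ⟨vtop, hvtopVtx, ?_⟩
      have h4 : (D vtop).card = 4 := hD2 vtop hvtopVtx hvtopstrict
      rw [h4]
      decide
  exact_mod_cast hnat
end B8

/-- Every simple 4-polytope has fatness strictly less than 3. -/
theorem simple_fatness_lt_three (P : Set E4) (hP : IsPolytope4 P)
    (hs : SimplePolytope P) :
    (fVec P 1 : ℝ) + (fVec P 2 : ℝ) < 3 * ((fVec P 0 : ℝ) + (fVec P 3 : ℝ)) := by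
  obtain ⟨V, hsp, rfl⟩ := hP
  exact main_count V hsp hs
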